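/- arXiv:2107.03355 — 2 statements merged into one kernel-verified Lean document; each statement's English description precedes it below -/
import Mathlib

section
/- Let X be a cocompact simply connected combinatorial G-2-complex. If the 1-skeleton of X is a fine graph, then the combinatorial Dehn function Δ_X of X takes only finite values. -/
/-! A combinatorial `G`-2-complex is modelled by its 1-skeleton, a simple graph `Γ` on a vertex
type `V`, together with a set `F` of 2-cells, each recorded by its boundary, a closed edge path
given as a list of directed edges (ordered pairs of adjacent vertices).  Combinatorial loops are
lists of consecutive directed edges; the combinatorial area of a loop is the least number of
2-cell moves (insertions/deletions of a boundary word of a face, read in either direction)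
needed, together with free moves (backtrack insertions/deletions and cyclic rotations), to reduce
the loop to the empty loop.  This is the standard van Kampen diagram description of the
combinatorial Dehn function. -/

variable {V : Type*}

/-- A directed edge. -/
abbrev DEdge (V : Type*) := V × V

/-- The reverse of a directed edge. -/
def dinv (e : DEdge V) : DEdge V := (e.2, e.1)

/-- `l` is a closed edge path (combinatorial loop) in the graph `Γ`. -/
def IsLoopIn (Γ : SimpleGraph V) (l : List (DEdge V)) : Prop :=
  (∀ e ∈ l, Γ.Adj e.1 e.2) ∧ List.Chain' (fun e f => e.2 = f.1) l ∧
    (∀ e ∈ l.head?, ∀ f ∈ l.getLast?, f.2 = e.1)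

/-- `l` is a circuit in `Γ`: a nonempty closed edge path visiting no vertex twice. -/
def IsCircuitIn (Γ : SimpleGraph V) (l : List (DEdge V)) : Prop :=
  IsLoopIn Γ l ∧ l ≠ [] ∧ (l.map Prod.fst).Nodup

/-- Free moves on edge words: insertion/deletion of a backtrack, and cyclic rotation. -/
inductive Move0 : List (DEdge V) → List (DEdge V) → Prop
  | cancel (a b : List (DEdge V)) (e : DEdge V) : Move0 (a ++ e :: dinv e :: b) (a ++ b)
  | insert (a b : List (DEdge V)) (e : DEdge V) : Move0 (a ++ b) (a ++ e :: dinv e :: b)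
  | rot (e : DEdge V) (l : List (DEdge V)) : Move0 (e :: l) (l ++ [e])
  | rot' (e : DEdge V) (l : List (DEdge V)) : Move0 (l ++ [e]) (e :: l)

/-- A boundary word of a face of `F`, read in either direction. -/
def FaceWord (F : Set (List (DEdge V))) (f : List (DEdge V)) : Prop :=
  f ∈ F ∨ f.reverse.map dinv ∈ F

/-- Face moves: insertion or deletion of the boundary word of a 2-cell. -/
inductive Move1 (F : Set (List (DEdge V))) : List (DEdge V) → List (DEdge V) → Prop
  | del (a b f : List (DEdge V)) : FaceWord F f → Move1 F (a ++ f ++ b) (a ++ b)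
  | ins (a b f : List (DEdge V)) : FaceWord F f → Move1 F (a ++ b) (a ++ f ++ b)

/-- `HasArea F l n`: the loop `l` bounds a disk diagram with `n` faces, i.e. `l` can be
reduced to the trivial loop using free moves and exactly `n` face moves. -/
inductive HasArea (F : Set (List (DEdge V))) : List (DEdge V) → ℕ → Prop
  | nil : HasArea F [] 0
  | free {l l' : List (DEdge V)} {n : ℕ} : Move0 l l' → HasArea F l' n → HasArea F l n
  | face {l l' : List (DEdge V)} {n : ℕ} : Move1 F l l' → HasArea F l' n → HasArea F l (n + 1)

/-- The 2-complex `(Γ, F)` is simply connected: every combinatorial loop is null-homotopic. -/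
def SimplyConnected2 (Γ : SimpleGraph V) (F : Set (List (DEdge V))) : Prop :=
  ∀ l, IsLoopIn Γ l → ∃ n, HasArea F l n

/-- The combinatorial Dehn function of `(Γ, F)` takes only finite values: circuits of bounded
length admit fillings of uniformly bounded area. -/
def DehnFiniteValues (Γ : SimpleGraph V) (F : Set (List (DEdge V))) : Prop :=
  ∀ n : ℕ, ∃ k : ℕ, ∀ l, IsCircuitIn Γ l → l.length ≤ n → ∃ m ≤ k, HasArea F l m

/-- The image of a directed-edge word under a group element. -/
def lsmul {G : Type*} [Group G] [MulAction G V] (g : G) (l : List (DEdge V)) :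
    List (DEdge V) := l.map fun e => (g • e.1, g • e.2)

/-- `(Γ, F)` is a cocompact `G`-2-complex: `G` acts on the vertices preserving adjacency and
the set of faces, with finitely many orbits of vertices, edges and faces. -/
structure IsCocompactG2Complex (G : Type*) [Group G] [MulAction G V]
    (Γ : SimpleGraph V) (F : Set (List (DEdge V))) : Prop where
  adj_smul : ∀ (g : G) (a b : V), Γ.Adj a b → Γ.Adj (g • a) (g • b)
  face_smul : ∀ (g : G), ∀ f ∈ F, lsmul g f ∈ F
  vertex_cocompact : ∃ s : Finset V, ∀ v : V, ∃ g : G, g • v ∈ s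
  edge_cocompact : ∃ s : Finset (V × V), ∀ a b : V, Γ.Adj a b → ∃ g : G, (g • a, g • b) ∈ s
  face_cocompact : ∃ s : Set (List (DEdge V)), s.Finite ∧ ∀ f ∈ F, ∃ g : G, lsmul g f ∈ s

/-- A simplicial graph is fine if every edge is contained in only finitely many circuits
(embedded cycles) of each bounded length. -/
def SimpleGraph.Fine {W : Type*} (Γ : SimpleGraph W) : Prop :=
  ∀ e ∈ Γ.edgeSet, ∀ n : ℕ,
    {c : (v : W) × Γ.Walk v v | c.2.IsCycle ∧ e ∈ c.2.edges ∧ c.2.length ≤ n}.Finite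


section AuxEquivariance
variable {G : Type*} [Group G] [MulAction G V] {F : Set (List (DEdge V))}

theorem lsmul_inv_lsmul (g : G) (l : List (DEdge V)) : lsmul g⁻¹ (lsmul g l) = l := by
  simp [lsmul, List.map_map, Function.comp_def]

theorem move0_smul (g : G) {l l' : List (DEdge V)} (h : Move0 l l') :
    Move0 (lsmul g l) (lsmul g l') := by
  cases h with
  | cancel a b e => simpa [lsmul, dinv] using Move0.cancel (lsmul g a) (lsmul g b) (g • e.1, g • e.2)
  | insert a b e => simpa [lsmul, dinv] using Move0.insert (lsmul g a) (lsmul g b) (g • e.1, g • e.2)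
  | rot e l => simpa [lsmul] using Move0.rot (g • e.1, g • e.2) (lsmul g l)
  | rot' e l => simpa [lsmul] using Move0.rot' (g • e.1, g • e.2) (lsmul g l)

theorem faceWord_smul (hF : ∀ (g : G), ∀ f ∈ F, lsmul g f ∈ F) (g : G) {f : List (DEdge V)}
    (h : FaceWord F f) : FaceWord F (lsmul g f) := by
  rcases h with h | h
  · exact Or.inl (hF g f h)
  · refine Or.inr ?_
    have : (lsmul g f).reverse.map dinv = lsmul g (f.reverse.map dinv) := by
      simp [lsmul, List.map_map, dinv, Function.comp_def]
    rw [this]; exact hF g _ h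

theorem move1_smul (hF : ∀ (g : G), ∀ f ∈ F, lsmul g f ∈ F) (g : G) {l l' : List (DEdge V)}
    (h : Move1 F l l') : Move1 F (lsmul g l) (lsmul g l') := by
  cases h with
  | del a b f hf => simpa [lsmul] using Move1.del (lsmul g a) (lsmul g b) _ (faceWord_smul hF g hf)
  | ins a b f hf => simpa [lsmul] using Move1.ins (lsmul g a) (lsmul g b) _ (faceWord_smul hF g hf)

theorem hasArea_smul (hF : ∀ (g : G), ∀ f ∈ F, lsmul g f ∈ F) (g : G) {l : List (DEdge V)} {n : ℕ}
    (h : HasArea F l n) : HasArea F (lsmul g l) n := by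
  induction h with
  | nil => exact HasArea.nil
  | free h0 _ ih => exact HasArea.free (move0_smul g h0) ih
  | face h1 _ ih => exact HasArea.face (move1_smul hF g h1) ih

theorem isLoopIn_smul {Γ : SimpleGraph V} (hadj : ∀ (g : G) (a b : V), Γ.Adj a b → Γ.Adj (g • a) (g • b))
    (g : G) {l : List (DEdge V)} (h : IsLoopIn Γ l) : IsLoopIn Γ (lsmul g l) := by
  obtain ⟨h1, h2, h3⟩ := h
  refine ⟨?_, ?_, ?_⟩
  · rintro e he
    obtain ⟨e', he', rfl⟩ := List.mem_map.mp he
    exact hadj g _ _ (h1 e' he')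
  · exact List.isChain_map_of_isChain _ (fun a b hab => by simp only [hab]) h2
  · intro e he f hf
    rw [lsmul, List.head?_map] at he
    rw [lsmul, List.getLast?_map] at hf
    rw [Option.mem_def, Option.map_eq_some_iff] at he hf
    obtain ⟨e', he', rfl⟩ := he
    obtain ⟨f', hf', rfl⟩ := hf
    have := h3 e' (by rw [he']; rfl) f' (by rw [hf']; rfl)
    simp only [this]

theorem isCircuitIn_smul {Γ : SimpleGraph V} (hadj : ∀ (g : G) (a b : V), Γ.Adj a b → Γ.Adj (g • a) (g • b))
    (g : G) {l : List (DEdge V)} (h : IsCircuitIn Γ l) : IsCircuitIn Γ (lsmul g l) := by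
  obtain ⟨hl, hne, hnd⟩ := h
  refine ⟨isLoopIn_smul hadj g hl, by simpa [lsmul] using hne, ?_⟩
  have : (lsmul g l).map Prod.fst = (l.map Prod.fst).map (fun v => g • v) := by
    simp [lsmul, List.map_map, Function.comp_def]
  rw [this]
  exact hnd.map (MulAction.injective g)

end AuxEquivariance

section AuxWalks

/-- The terminal vertex of an edge list starting at `u`. -/
def lastV (u : V) : List (DEdge V) → V
  | [] => u
  | e :: t => lastV e.2 t

/-- The walk corresponding to a consecutive edge list. -/
def walkOfList (Γ : SimpleGraph V) :
    (u : V) → (l : List (DEdge V)) →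
      (∀ e ∈ l, Γ.Adj e.1 e.2) → l.Chain' (fun e f => e.2 = f.1) →
      (∀ e ∈ l.head?, e.1 = u) → Γ.Walk u (lastV u l)
  | _, [], _, _, _ => SimpleGraph.Walk.nil
  | u, e :: t, hadj, hch, hu =>
    SimpleGraph.Walk.cons
      (show Γ.Adj u e.2 by rw [← hu e rfl]; exact hadj e List.mem_cons_self)
      (walkOfList Γ e.2 t (fun f hf => hadj f (List.mem_cons_of_mem _ hf))
        ((List.isChain_cons.mp hch).2 : t.Chain' (fun e f => e.2 = f.1)) (fun f hf => ((List.isChain_cons.mp hch).1 f hf).symm))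

theorem walkOfList_darts (Γ : SimpleGraph V) (u : V) (l : List (DEdge V)) (h1 h2 h3) :
    (walkOfList Γ u l h1 h2 h3).darts.map SimpleGraph.Dart.toProd = l := by
  induction l generalizing u with
  | nil => rfl
  | cons e t ih =>
    have h := h3 e rfl
    subst h
    exact congrArg (e :: ·) (ih _ _ _ _)

theorem walkOfList_length (Γ : SimpleGraph V) (u : V) (l : List (DEdge V)) (h1 h2 h3) :
    (walkOfList Γ u l h1 h2 h3).length = l.length := by
  rw [← SimpleGraph.Walk.length_darts]
  conv_rhs => rw [← walkOfList_darts Γ u l h1 h2 h3]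
  rw [List.length_map]

theorem lastV_eq_getLast (u : V) (l : List (DEdge V)) (h : l ≠ []) :
    lastV u l = (l.getLast h).2 := by
  induction l generalizing u with
  | nil => exact absurd rfl h
  | cons e t ih =>
    cases t with
    | nil => rfl
    | cons f s =>
      rw [List.getLast_cons (by simp)]
      exact ih e.2 (by simp)

end AuxWalks

section AuxCircuits
variable {Γ : SimpleGraph V}

theorem circuit_snd_getElem {l : List (DEdge V)} (h : IsCircuitIn Γ l)
    {i : ℕ} (hi : i < l.length) : l[i].2 = (l[(i+1) % l.length]'(Nat.mod_lt _ (by omega))).1 := by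
  obtain ⟨⟨hadj, hch, hcl⟩, hne, hnd⟩ := h
  by_cases hlt : i + 1 < l.length
  · have : (i+1) % l.length = i + 1 := Nat.mod_eq_of_lt hlt
    simp only [this]
    have := List.isChain_iff_getElem.mp hch i (by omega)
    simpa [List.get_eq_getElem] using this
  · have hieq : i + 1 = l.length := by omega
    have hm : (i+1) % l.length = 0 := by rw [hieq, Nat.mod_self]
    simp only [hm]
    have h1 : l.getLast hne = l[i] := by rw [List.getLast_eq_getElem]; congr 1; omega
    have h2 : l.head hne = l[0] := List.head_eq_getElem_zero hne
    have := hcl (l.head hne) (by rw [List.head?_eq_head hne]; rfl) (l.getLast hne)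
      (by rw [List.getLast?_eq_getLast_of_ne_nil hne]; rfl)
    rw [h1, h2] at this
    exact this

theorem circuit_fst_inj {l : List (DEdge V)} (h : IsCircuitIn Γ l) {i j : ℕ}
    (hi : i < l.length) (hj : j < l.length) (heq : l[i].1 = l[j].1) : i = j := by
  have hnd := h.2.2
  have hi' : i < (l.map Prod.fst).length := by simpa using hi
  have hj' : j < (l.map Prod.fst).length := by simpa using hj
  have : (l.map Prod.fst)[i]'hi' = (l.map Prod.fst)[j]'hj' := by
    simpa [List.getElem_map] using heq
  exact hnd.getElem_inj_iff.mp this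

theorem mod_succ_lt {i m : ℕ} (h : i < m) : (i+1) % m = if i + 1 = m then 0 else i + 1 := by
  split
  · rename_i h'; rw [h', Nat.mod_self]
  · exact Nat.mod_eq_of_lt (by omega)

theorem circuit_snd_nodup {l : List (DEdge V)} (h : IsCircuitIn Γ l) :
    (l.map Prod.snd).Nodup := by
  rw [List.nodup_iff_injective_getElem]
  rintro ⟨i, hi⟩ ⟨j, hj⟩ hij
  have hi' : i < l.length := by simpa using hi
  have hj' : j < l.length := by simpa using hj
  simp only [List.getElem_map] at hij
  rw [circuit_snd_getElem h hi', circuit_snd_getElem h hj'] at hij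
  have hmod := circuit_fst_inj h (Nat.mod_lt _ (by omega)) (Nat.mod_lt _ (by omega)) hij
  have : i = j := by
    rw [mod_succ_lt hi', mod_succ_lt hj'] at hmod
    split at hmod <;> split at hmod <;> omega
  exact Fin.ext this

theorem circuit_edges_nodup {l : List (DEdge V)} (h : IsCircuitIn Γ l) (h3 : 3 ≤ l.length) :
    (l.map Sym2.mk.uncurry).Nodup := by
  have hlnd : l.Nodup := h.2.2.of_map Prod.fst
  refine List.Nodup.map_on ?_ hlnd
  intro x hx y hy hxy
  rcases Sym2.mk_eq_mk_iff.mp hxy with h' | h'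
  · exact h'
  · exfalso
    obtain ⟨i, hi, rfl⟩ := List.getElem_of_mem hx
    obtain ⟨j, hj, rfl⟩ := List.getElem_of_mem hy
    have e1 : l[i].1 = l[j].2 := by rw [h']; rfl
    have e2 : l[i].2 = l[j].1 := by rw [h']; rfl
    rw [circuit_snd_getElem h hj] at e1
    rw [circuit_snd_getElem h hi] at e2
    have hij1 := circuit_fst_inj h hi (Nat.mod_lt _ (by omega)) e1
    have hij2 := circuit_fst_inj h (Nat.mod_lt _ (by omega)) hj e2
    rw [mod_succ_lt hj] at hij1
    rw [mod_succ_lt hi] at hij2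
    split at hij1 <;> split at hij2 <;> omega

theorem circuit_length_ne_one {l : List (DEdge V)} (h : IsCircuitIn Γ l) : l.length ≠ 1 := by
  intro hl
  obtain ⟨⟨hadj, hch, hcl⟩, hne, hnd⟩ := h
  match l, hl with
  | [e], _ =>
    have := hcl e rfl e rfl
    exact Γ.loopless.irrefl e.1 (this ▸ hadj e (by simp))

theorem circuit_len_two {l : List (DEdge V)} (h : IsCircuitIn Γ l) (hl : l.length ≤ 2)
    {e0 : DEdge V} (hh : l.head? = some e0) : l = [e0, dinv e0] := by
  have h1 := circuit_length_ne_one h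
  have hne := h.2.1
  have hlen : l.length = 2 := by
    have : l.length ≠ 0 := by simpa using hne
    omega
  obtain ⟨e, f, rfl⟩ := List.length_eq_two.mp hlen
  obtain ⟨⟨hadj, hch, hcl⟩, -, -⟩ := h
  have he : e = e0 := by simpa using hh
  subst he
  have hchain : e.2 = f.1 := (List.isChain_cons_cons.mp hch).1
  have hclose : f.2 = e.1 := hcl e rfl f (by simp [List.getLast?])
  have : f = dinv e := Prod.ext hchain.symm hclose
  rw [this]

theorem hasArea_backtrack (F : Set (List (DEdge V))) (e : DEdge V) :
    HasArea F [e, dinv e] 0 :=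
  HasArea.free (by simpa using Move0.cancel [] [] e) HasArea.nil

/-- The conditions under which an edge list can be turned into a closed walk at `u`. -/
def GoodLoop (Γ : SimpleGraph V) (u : V) (l : List (DEdge V)) : Prop :=
  (∀ e ∈ l, Γ.Adj e.1 e.2) ∧ l.Chain' (fun e f => e.2 = f.1) ∧
    (∀ e ∈ l.head?, e.1 = u) ∧ lastV u l = u

open Classical in
/-- The closed walk at `u` associated to an edge list (junk if conditions fail). -/
noncomputable def cycleOfList (Γ : SimpleGraph V) (u : V) (l : List (DEdge V)) :
    (v : V) × Γ.Walk v v :=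
  if h : GoodLoop Γ u l then
    ⟨u, (walkOfList Γ u l h.1 h.2.1 h.2.2.1).copy rfl h.2.2.2⟩
  else ⟨u, SimpleGraph.Walk.nil⟩

theorem goodLoop_of_circuit {l : List (DEdge V)} (h : IsCircuitIn Γ l)
    {e0 : DEdge V} (hh : l.head? = some e0) : GoodLoop Γ e0.1 l := by
  obtain ⟨⟨hadj, hch, hcl⟩, hne, hnd⟩ := h
  have hhead : l.head hne = e0 := by
    have := List.head?_eq_head hne (l := l)
    rw [hh] at this
    exact (Option.some_injective _ this).symm
  refine ⟨hadj, hch, ?_, ?_⟩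
  · intro e he
    rw [Option.mem_def, hh] at he
    rw [← Option.some_injective _ he]
  · rw [lastV_eq_getLast e0.1 l hne]
    have := hcl (l.head hne) (by rw [List.head?_eq_head hne]; rfl) (l.getLast hne)
      (by rw [List.getLast?_eq_getLast_of_ne_nil hne]; rfl)
    rw [hhead] at this
    exact this

theorem cycleOfList_darts {l : List (DEdge V)} {u : V} (h : GoodLoop Γ u l) :
    (cycleOfList Γ u l).2.darts.map SimpleGraph.Dart.toProd = l := by
  rw [cycleOfList, dif_pos h]
  rw [SimpleGraph.Walk.darts_copy]
  exact walkOfList_darts Γ u l h.1 h.2.1 h.2.2.1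

theorem cycleOfList_edges {l : List (DEdge V)} {u : V} (h : GoodLoop Γ u l) :
    (cycleOfList Γ u l).2.edges = l.map Sym2.mk.uncurry := by
  have hd := cycleOfList_darts h
  unfold SimpleGraph.Walk.edges
  conv_rhs => rw [← hd, List.map_map]
  rfl

theorem cycleOfList_length {l : List (DEdge V)} {u : V} (h : GoodLoop Γ u l) :
    (cycleOfList Γ u l).2.length = l.length := by
  have hd := cycleOfList_darts h
  rw [← SimpleGraph.Walk.length_darts]
  conv_rhs => rw [← hd, List.length_map]

theorem cycleOfList_isCycle {l : List (DEdge V)} {e0 : DEdge V}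
    (h : IsCircuitIn Γ l) (hh : l.head? = some e0) (h3 : 3 ≤ l.length) :
    (cycleOfList Γ e0.1 l).2.IsCycle := by
  have hg := goodLoop_of_circuit h hh
  refine ⟨⟨⟨?_⟩, ?_⟩, ?_⟩
  · rw [cycleOfList_edges hg]
    exact circuit_edges_nodup h h3
  · intro hnil
    have := cycleOfList_length hg
    rw [hnil] at this
    simp at this
    omega
  · have : (cycleOfList Γ e0.1 l).2.support.tail = l.map Prod.snd := by
      rw [← SimpleGraph.Walk.map_snd_darts]
      conv_rhs => rw [← cycleOfList_darts hg, List.map_map]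
      rfl
    rw [this]
    exact circuit_snd_nodup h

theorem circuits_head_finite (hfine : Γ.Fine) (n : ℕ) (e0 : DEdge V) :
    {l : List (DEdge V) | IsCircuitIn Γ l ∧ l.length ≤ n ∧ l.head? = some e0}.Finite := by
  by_cases hadj : Γ.Adj e0.1 e0.2
  · have hedge : s(e0.1, e0.2) ∈ Γ.edgeSet := hadj
    have hfin := hfine _ hedge n
    set S3 : Set (List (DEdge V)) :=
      {l | (IsCircuitIn Γ l ∧ l.length ≤ n ∧ l.head? = some e0) ∧ 3 ≤ l.length} with hS3def
    have hS3 : S3.Finite := by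
      refine Set.Finite.of_finite_image (f := cycleOfList Γ e0.1) ?_ ?_
      · refine hfin.subset ?_
        rintro c ⟨l, ⟨⟨hc, hlen, hh⟩, h3⟩, rfl⟩
        have hg := goodLoop_of_circuit hc hh
        refine ⟨cycleOfList_isCycle hc hh h3, ?_, ?_⟩
        · rw [cycleOfList_edges hg]
          have he0 : e0 ∈ l := List.mem_of_mem_head? (by rw [hh]; rfl)
          have : s(e0.1, e0.2) = Sym2.mk.uncurry e0 := rfl
          rw [this]
          exact List.mem_map_of_mem he0
        · rw [cycleOfList_length hg]
          exact hlen
      · rintro l ⟨⟨hc, hlen, hh⟩, -⟩ l' ⟨⟨hc', hlen', hh'⟩, -⟩ heq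
        have h1 := cycleOfList_darts (goodLoop_of_circuit hc hh)
        have h2 := cycleOfList_darts (goodLoop_of_circuit hc' hh')
        rw [← h1, ← h2, heq]
    have hsub : {l : List (DEdge V) | IsCircuitIn Γ l ∧ l.length ≤ n ∧ l.head? = some e0} ⊆
        insert [e0, dinv e0] S3 := by
      rintro l ⟨hc, hlen, hh⟩
      by_cases h3 : 3 ≤ l.length
      · exact Set.mem_insert_iff.mpr (Or.inr ⟨⟨hc, hlen, hh⟩, h3⟩)
      · exact Set.mem_insert_iff.mpr (Or.inl (circuit_len_two hc (by omega) hh))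
    exact (hS3.insert _).subset hsub
  · convert Set.finite_empty
    ext l
    simp only [Set.mem_setOf_eq, Set.mem_empty_iff_false, iff_false]
    rintro ⟨hc, -, hh⟩
    exact hadj (hc.1.1 e0 (List.mem_of_mem_head? (by rw [hh]; rfl)))

end AuxCircuits

/-- For a cocompact simply connected combinatorial `G`-2-complex, if the
1-skeleton is a fine graph then the combinatorial Dehn function takes only finite values. -/
theorem dehnFiniteValues_of_fine {G : Type*} [Group G] [MulAction G V]
    (Γ : SimpleGraph V) (F : Set (List (DEdge V)))
    (hcc : IsCocompactG2Complex G Γ F)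
    (hsc : SimplyConnected2 Γ F)
    (hfine : Γ.Fine) :
    DehnFiniteValues Γ F := by
  classical
  intro n
  obtain ⟨s, hs⟩ := hcc.edge_cocompact
  have hSfin : (⋃ e0 ∈ s, {l : List (DEdge V) |
      IsCircuitIn Γ l ∧ l.length ≤ n ∧ l.head? = some e0}).Finite :=
    Set.Finite.biUnion s.finite_toSet (fun e0 _ => circuits_head_finite hfine n e0)
  set A : List (DEdge V) → ℕ := fun l => if h : ∃ m, HasArea F l m then h.choose else 0 with hAdef
  have hA : ∀ l, IsLoopIn Γ l → HasArea F l (A l) := by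
    intro l hl
    have h : ∃ m, HasArea F l m := hsc l hl
    simp only [hAdef, dif_pos h]
    exact h.choose_spec
  refine ⟨hSfin.toFinset.sup A, ?_⟩
  intro l hl hlen
  have hne := hl.2.1
  have hadj : Γ.Adj (l.head hne).1 (l.head hne).2 := hl.1.1 _ (List.head_mem hne)
  obtain ⟨g, hg⟩ := hs _ _ hadj
  have hcirc : IsCircuitIn Γ (lsmul g l) := isCircuitIn_smul hcc.adj_smul g hl
  have hmem : lsmul g l ∈ ⋃ e0 ∈ s, {l : List (DEdge V) |
      IsCircuitIn Γ l ∧ l.length ≤ n ∧ l.head? = some e0} := by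
    refine Set.mem_biUnion hg ?_
    refine ⟨hcirc, by simpa [lsmul] using hlen, ?_⟩
    rw [lsmul, List.head?_map, List.head?_eq_head hne]
    rfl
  refine ⟨A (lsmul g l), Finset.le_sup ((Set.Finite.mem_toFinset hSfin).mpr hmem), ?_⟩
  have harea := hA _ hcirc.1
  have := hasArea_smul hcc.face_smul g⁻¹ harea
  rwa [lsmul_inv_lsmul] at this
end

section
/- Let G be a group acting by automorphisms on a fine graph Γ with finite edge stabilisers, and let P be a collection of representatives of conjugacy classes of vertex stabilisers. Then P is an almost malnormal collection: for any two vertex-stabiliser representatives P, P' and g ∈ G, either gPg⁻¹ ∩ P' is finite, or P = P' and g ∈ P. -/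
open scoped Pointwise

variable {G : Type*} [Group G]

/-- Word distance between `g` and `h` with respect to a generating set `S` (values in `ℕ∞`). -/
noncomputable def wordDist (S : Set G) (g h : G) : ℕ∞ :=
  sInf {n : ℕ∞ | ∃ l : List G, (∀ x ∈ l, x ∈ S ∨ x⁻¹ ∈ S) ∧ l.prod = g⁻¹ * h ∧ (l.length : ℕ∞) = n}

/-- Closed `r`-neighbourhood of a subset of `G` in the word metric. -/
def nbhd (S : Set G) (r : ℕ∞) (A : Set G) : Set G := {g | ∃ a ∈ A, wordDist S g a ≤ r}

/-- Hausdorff distance between subsets of `G` in the word metric. -/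
noncomputable def hdist (S : Set G) (A B : Set G) : ℕ∞ :=
  sInf {r : ℕ∞ | A ⊆ nbhd S r B ∧ B ⊆ nbhd S r A}

/-- The conjugate subgroup `g P g⁻¹`. -/
def conjSub (g : G) (P : Subgroup G) : Subgroup G := ConjAct.toConjAct g • P

/-- The collection of all left cosets `gP`, `g ∈ G`, `P ∈ Ps`, as subsets of `G`. -/
def cosetsOf (Ps : Set (Subgroup G)) : Set (Set G) :=
  {A | ∃ (g : G) (P : Subgroup G), P ∈ Ps ∧ A = g • (P : Set G)}

/-- A collection of subgroups is almost malnormal if any conjugate of a member meets any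
member in a finite subgroup, except for the trivial configurations. -/
def AlmostMalnormal (Ps : Set (Subgroup G)) : Prop :=
  ∀ P ∈ Ps, ∀ P' ∈ Ps, ∀ g : G,
    ((conjSub g P ⊓ P' : Subgroup G) : Set G).Finite ∨ (P = P' ∧ g ∈ P)

/-- A collection of subgroups is reduced if commensurability of a member with a conjugate of a
member only happens trivially. -/
def Reduced (Ps : Set (Subgroup G)) : Prop :=
  ∀ P ∈ Ps, ∀ Q ∈ Ps, ∀ g : G, Subgroup.Commensurable P (conjSub g Q) → P = Q ∧ g ∈ P

section AuxLemmas

open SimpleGraph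

variable {V : Type*} {Γ : SimpleGraph V}

/-- Split a walk at the first vertex lying in `B`. -/
lemma walk_split_at_first (B : Set V) :
    ∀ {u w : V} (q : Γ.Walk u w), u ∉ B → w ∈ B →
    ∃ (x : V) (q₁ : Γ.Walk u x) (q₂ : Γ.Walk x w), x ∈ B ∧ q = q₁.append q₂ ∧
      ∀ y ∈ q₁.support, y ≠ x → y ∉ B := by
  intro u w q
  induction q with
  | nil => intro hu hw; exact absurd hw hu
  | @cons u u' w h q' ih =>
    intro hu hw
    by_cases hu' : u' ∈ B
    · refine ⟨u', Walk.cons h Walk.nil, q', hu', rfl, ?_⟩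
      intro y hy hyx
      simp only [Walk.support_cons, Walk.support_nil, List.mem_cons, List.mem_singleton] at hy
      rcases hy with rfl | rfl | h'
      · exact hu
      · exact absurd rfl hyx
      · cases h'
    · obtain ⟨x, q₁, q₂, hx, heq, hprop⟩ := ih hu' hw
      refine ⟨x, Walk.cons h q₁, q₂, hx, by rw [heq]; rfl, ?_⟩
      intro y hy hyx
      simp only [Walk.support_cons, List.mem_cons] at hy
      rcases hy with rfl | hy
      · exact hu
      · exact hprop y hy hyx

/-- A walk in a simple graph is determined by its support. -/
lemma walk_support_inj : ∀ {v w : V} (p q : Γ.Walk v w), p.support = q.support → p = q := by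
  intro v w p
  induction p with
  | nil =>
    intro q h
    cases q with
    | nil => rfl
    | cons h' q' =>
      rw [Walk.support_nil, Walk.support_cons, q'.support_eq_cons] at h
      simp at h
  | @cons v u w h p' ih =>
    intro q hq
    cases q with
    | nil =>
      rw [Walk.support_nil, Walk.support_cons, p'.support_eq_cons] at hq
      simp at hq
    | @cons _ u' _ h' q' =>
      rw [Walk.support_cons, Walk.support_cons, p'.support_eq_cons, q'.support_eq_cons] at hq
      obtain ⟨-, hq2⟩ := List.cons_eq_cons.mp hq
      obtain ⟨huu', htail⟩ := List.cons_eq_cons.mp hq2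
      subst huu'
      have : p'.support = q'.support := by
        rw [p'.support_eq_cons, q'.support_eq_cons, htail]
      rw [ih q' this]

lemma paths_finite (hfine : Γ.Fine) :
    ∀ (n : ℕ) (v w : V), {p : Γ.Walk v w | p.IsPath ∧ p.length ≤ n}.Finite := by
  intro n
  induction n with
  | zero =>
    intro v w
    rcases eq_or_ne v w with rfl | hvw
    · refine (Set.finite_singleton Walk.nil).subset ?_
      rintro p ⟨hp, -⟩
      simpa [Walk.isPath_iff_eq_nil] using hp
    · convert Set.finite_empty
      ext p
      simp only [Set.mem_setOf_eq, Set.mem_empty_iff_false, iff_false, not_and]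
      intro hp hl
      cases p with
      | nil => exact hvw rfl
      | cons h q => simp at hl
  | succ n ih =>
    intro v w
    classical
    rcases eq_or_ne v w with rfl | hvw
    · refine (Set.finite_singleton Walk.nil).subset ?_
      rintro p ⟨hp, -⟩
      simpa [Walk.isPath_iff_eq_nil] using hp
    · rcases Set.eq_empty_or_nonempty {p : Γ.Walk v w | p.IsPath ∧ p.length ≤ n + 1} with he | ⟨β, hβ⟩
      · rw [he]; exact Set.finite_empty
      · obtain ⟨hβp, hβl⟩ := hβ
        cases β with
        | nil => exact absurd rfl hvw
        | @cons _ b1 _ hb1 β' =>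
          rw [Walk.length_cons] at hβl
          have hC : {c : (x : V) × Γ.Walk x x | c.2.IsCycle ∧ s(v, b1) ∈ c.2.edges ∧
              c.2.length ≤ 2 * n + 3}.Finite := hfine s(v, b1) (Γ.mem_edgeSet.2 hb1) (2 * n + 3)
          set C := {c : (x : V) × Γ.Walk x x | c.2.IsCycle ∧ s(v, b1) ∈ c.2.edges ∧
              c.2.length ≤ 2 * n + 3} with hCdef
          set U : Set V := {y | y ∈ (Walk.cons hb1 β').support} ∪
            ⋃ c ∈ C, {y | y ∈ c.2.support} with hUdef
          have hU : U.Finite := ((Walk.cons hb1 β').support.finite_toSet).union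
            (hC.biUnion fun c _ => (c.2.support.finite_toSet))
          -- Key claim: every path of length ≤ n+1 has second vertex in U.
          have key : ∀ (u : V) (h : Γ.Adj v u) (α' : Γ.Walk u w),
              (Walk.cons h α').IsPath → (Walk.cons h α').length ≤ n + 1 → u ∈ U := by
            intro u h α' hαp hαl
            rw [Walk.length_cons] at hαl
            by_cases hu : u ∈ (Walk.cons hb1 β').support
            · exact Or.inl hu
            · right
              obtain ⟨hα'p, hvα'⟩ := (Walk.cons_isPath_iff h α').mp hαp
              obtain ⟨x, α₁, α₂, hxB, heqα, hprop⟩ :=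
                walk_split_at_first {y | y ∈ (Walk.cons hb1 β').support} α' hu
                  ((Walk.cons hb1 β').end_mem_support)
              have hxB' : x ∈ (Walk.cons hb1 β').support := hxB
              have hα₁sub : ∀ y ∈ α₁.support, y ∈ α'.support := by
                intro y hy
                rw [heqα, Walk.mem_support_append_iff]
                exact Or.inl hy
              have hxα' : x ∈ α'.support := hα₁sub x α₁.end_mem_support
              have hvx : v ≠ x := fun hh => hvα' (hh ▸ hxα')
              have hvα₁ : v ∉ α₁.support := fun hh => hvα' (hα₁sub v hh)
              have hα₁p : α₁.IsPath := by
                rw [heqα] at hα'p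
                exact hα'p.of_append_left
              have hβxp : ((Walk.cons hb1 β').takeUntil x hxB').IsPath := hβp.takeUntil hxB'
              have hβxsub : ∀ y ∈ ((Walk.cons hb1 β').takeUntil x hxB').support,
                  y ∈ (Walk.cons hb1 β').support :=
                fun y hy => (Walk.cons hb1 β').support_takeUntil_subset hxB' hy
              -- the concatenated path from u to v
              have hw'p : (α₁.append ((Walk.cons hb1 β').takeUntil x hxB').reverse).IsPath := by
                rw [Walk.isPath_def, Walk.support_append, List.nodup_append]
                refine ⟨hα₁p.support_nodup, ?_, ?_⟩
                · exact (hβxp.reverse.support_nodup).sublist (List.tail_sublist _)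
                · intro y hy z hy' hyz
                  subst hyz
                  have hyβ : y ∈ ((Walk.cons hb1 β').takeUntil x hxB').reverse.support :=
                    List.mem_of_mem_tail hy'
                  have hyB : y ∈ (Walk.cons hb1 β').support := by
                    rw [Walk.support_reverse, List.mem_reverse] at hyβ
                    exact hβxsub y hyβ
                  have hyx : y = x := by
                    by_contra hne
                    exact hprop y hy hne hyB
                  subst hyx
                  have hh2 : ((Walk.cons hb1 β').takeUntil y hxB').reverse.support =
                      y :: ((Walk.cons hb1 β').takeUntil y hxB').reverse.support.tail :=
                    Walk.support_eq_cons _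
                  have hnd := hβxp.reverse.support_nodup
                  rw [hh2] at hnd
                  exact (List.nodup_cons.mp hnd).1 hy'
              have he2 : s(v, u) ∉ (α₁.append ((Walk.cons hb1 β').takeUntil x hxB').reverse).edges := by
                rw [Walk.edges_append, List.mem_append]
                rintro (hh | hh)
                · exact hvα₁ (α₁.fst_mem_support_of_mem_edges hh)
                · have hh3 : u ∈ ((Walk.cons hb1 β').takeUntil x hxB').reverse.support :=
                    Walk.snd_mem_support_of_mem_edges _ hh
                  rw [Walk.support_reverse, List.mem_reverse] at hh3
                  exact hu (hβxsub u hh3)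
              have hcyc : (Walk.cons h (α₁.append ((Walk.cons hb1 β').takeUntil x hxB').reverse)).IsCycle :=
                SimpleGraph.Path.cons_isCycle ⟨_, hw'p⟩ h he2
              -- the first edge of β is an edge of the takeUntil part
              have hβxnil : ¬ ((Walk.cons hb1 β').takeUntil x hxB').Nil :=
                Walk.not_nil_of_ne hvx
              have hein : s(v, b1) ∈ ((Walk.cons hb1 β').takeUntil x hxB').edges := by
                have hedges : ((Walk.cons hb1 β').takeUntil x hxB').edges ++
                    ((Walk.cons hb1 β').dropUntil x hxB').edges = (Walk.cons hb1 β').edges := by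
                  rw [← Walk.edges_append, Walk.take_spec]
                have hβxe : ((Walk.cons hb1 β').takeUntil x hxB').edges =
                    s(v, ((Walk.cons hb1 β').takeUntil x hxB').getVert 1) ::
                      ((Walk.cons hb1 β').takeUntil x hxB').tail.edges := by
                  conv_lhs => rw [← Walk.cons_tail_eq _ hβxnil]
                  rw [Walk.edges_cons]
                rw [hβxe, Walk.edges_cons] at hedges
                have hhead : s(v, ((Walk.cons hb1 β').takeUntil x hxB').getVert 1) = s(v, b1) := by
                  have := congrArg List.head? hedges
                  simpa using this
                rw [hβxe, hhead]
                exact List.mem_cons_self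
              have hmem : (⟨v, Walk.cons h (α₁.append ((Walk.cons hb1 β').takeUntil x hxB').reverse)⟩ :
                  (y : V) × Γ.Walk y y) ∈ C := by
                refine ⟨hcyc, ?_, ?_⟩
                · rw [Walk.edges_cons, List.mem_cons]
                  right
                  rw [Walk.edges_append, List.mem_append]
                  right
                  rw [Walk.edges_reverse, List.mem_reverse]
                  exact hein
                · have h1 : α₁.length ≤ α'.length := by
                    rw [heqα, Walk.length_append]; omega
                  have h3 := (Walk.cons hb1 β').length_takeUntil_le hxB'
                  rw [Walk.length_cons] at h3
                  rw [Walk.length_cons, Walk.length_append, Walk.length_reverse]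
                  omega
              refine Set.mem_iUnion₂.2 ⟨_, hmem, ?_⟩
              rw [Set.mem_setOf_eq, Walk.support_cons, List.mem_cons]
              right
              exact Walk.start_mem_support _
          -- now finish by injecting into supports
          refine Set.Finite.of_finite_image (f := Walk.support) ?_
            (fun p hp q hq hpq => walk_support_inj p q hpq)
          have himage : Walk.support '' {p : Γ.Walk v w | p.IsPath ∧ p.length ≤ n + 1} ⊆
              ⋃ u ∈ U, (fun q : Γ.Walk u w => v :: q.support) ''
                {q : Γ.Walk u w | q.IsPath ∧ q.length ≤ n} := by
            rintro l ⟨p, ⟨hpp, hpl⟩, rfl⟩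
            cases p with
            | nil => exact absurd rfl hvw
            | @cons _ u _ hadj p' =>
              have hup : u ∈ U := key u hadj p' hpp hpl
              refine Set.mem_iUnion₂.2 ⟨u, hup, p', ⟨?_, ?_⟩, ?_⟩
              · exact ((Walk.cons_isPath_iff hadj p').mp hpp).1
              · rw [Walk.length_cons] at hpl; omega
              · rw [Walk.support_cons]
          exact Set.Finite.subset (hU.biUnion fun u _ => Set.Finite.image _ (ih u w)) himage

lemma stab_pair_finite {G : Type*} [Group G] [MulAction G V] {Γ : SimpleGraph V}
    (hconn : Γ.Connected) (hfine : Γ.Fine)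
    (hadj : ∀ (g : G) (a b : V), Γ.Adj a b → Γ.Adj (g • a) (g • b))
    (hstab : ∀ a b : V, Γ.Adj a b → {g : G | g • a = a ∧ g • b = b}.Finite)
    {a b : V} (hab : a ≠ b) : {g : G | g • a = a ∧ g • b = b}.Finite := by
  classical
  obtain ⟨p0⟩ := hconn.preconnected a b
  set p : Γ.Walk a b := p0.bypass with hpdef
  have hpp : p.IsPath := p0.bypass_isPath
  set n : ℕ := p.length with hndef
  have hF : {q : Γ.Walk a b | q.IsPath ∧ q.length ≤ n}.Finite := paths_finite hfine n a b
  -- the graph homomorphism induced by g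
  let f : G → (Γ →g Γ) := fun g => ⟨fun y => g • y, fun hyz => hadj g _ _ hyz⟩
  -- p is a cons since a ≠ b
  cases hp : p with
  | nil => exact absurd rfl hab
  | @cons _ u _ hu p' =>
    -- cover the stabiliser set by fibers indexed by F
    have hcover : {g : G | g • a = a ∧ g • b = b} ⊆
        ⋃ q ∈ {q : Γ.Walk a b | q.IsPath ∧ q.length ≤ n},
          {g : G | g • a = a ∧ g • b = b ∧ (p.support).map (g • ·) = q.support} := by
      intro g ⟨hga, hgb⟩
      refine Set.mem_iUnion₂.2 ⟨(p.map (f g)).copy hga hgb, ⟨?_, ?_⟩, hga, hgb, ?_⟩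
      · rw [Walk.isPath_copy]
        exact Walk.map_isPath_of_injective (MulAction.injective g) hpp
      · rw [Walk.length_copy, Walk.length_map]
      · rw [Walk.support_copy, Walk.support_map]; rfl
    refine Set.Finite.subset (hF.biUnion fun q hq => ?_) hcover
    -- each fiber is finite
    rcases Set.eq_empty_or_nonempty
      {g : G | g • a = a ∧ g • b = b ∧ (p.support).map (g • ·) = q.support} with he | ⟨g₀, hg₀⟩
    · rw [he]; exact Set.finite_empty
    · obtain ⟨hg₀a, hg₀b, hg₀s⟩ := hg₀
      have hK : {k : G | k • a = a ∧ k • u = u}.Finite := hstab a u hu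
      refine Set.Finite.subset (hK.image (fun k => g₀ * k)) ?_
      rintro g ⟨hga, hgb, hgs⟩
      refine ⟨g₀⁻¹ * g, ⟨?_, ?_⟩, by group⟩
      · rw [mul_smul, hga, inv_smul_eq_iff, hg₀a]
      · -- compare second support entries
        have hsupp : (p.support).map (g • ·) = (p.support).map (g₀ • ·) := hgs.trans hg₀s.symm
        rw [hp, Walk.support_cons, p'.support_eq_cons] at hsupp
        simp only [List.map_cons, List.cons_eq_cons] at hsupp
        obtain ⟨-, hu2, -⟩ := hsupp
        rw [mul_smul, hu2, inv_smul_smul]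

lemma conjSub_stabilizer {G : Type*} [Group G] [MulAction G V] (g : G) (v : V) :
    conjSub g (MulAction.stabilizer G v) = MulAction.stabilizer G (g • v) := by
  ext x
  rw [conjSub, Subgroup.mem_smul_pointwise_iff_exists, MulAction.mem_stabilizer_iff]
  constructor
  · rintro ⟨s, hs, rfl⟩
    rw [MulAction.mem_stabilizer_iff] at hs
    rw [ConjAct.smul_def, ConjAct.ofConjAct_toConjAct]
    rw [mul_smul, mul_smul, inv_smul_smul, hs]
  · intro hx
    refine ⟨g⁻¹ * x * g, ?_, ?_⟩
    · rw [MulAction.mem_stabilizer_iff, mul_smul, mul_smul, hx, inv_smul_smul]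
    · rw [ConjAct.smul_def, ConjAct.ofConjAct_toConjAct]
      group

end AuxLemmas

/-- If `G` acts on a connected fine graph with finite edge stabilisers and
`Ps` is a set of representatives of conjugacy classes of vertex stabilisers, then `Ps` is an
almost malnormal collection. -/
theorem almostMalnormal_of_action_on_fine_graph {V : Type*} [MulAction G V]
    (Γ : SimpleGraph V) (hconn : Γ.Connected) (hfine : Γ.Fine)
    (hadj : ∀ (g : G) (a b : V), Γ.Adj a b → Γ.Adj (g • a) (g • b))
    (hstab : ∀ a b : V, Γ.Adj a b → {g : G | g • a = a ∧ g • b = b}.Finite)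
    (Ps : Set (Subgroup G))
    (hrep : ∀ P ∈ Ps, ∃ v : V, P = MulAction.stabilizer G v)
    (hall : ∀ v : V, ∃ P ∈ Ps, ∃ g : G, conjSub g P = MulAction.stabilizer G v)
    (huniq : ∀ P ∈ Ps, ∀ P' ∈ Ps, (∃ g : G, conjSub g P = P') → P = P') :
    AlmostMalnormal Ps := by
  intro P hP P' hP' g
  obtain ⟨v, hPv⟩ := hrep P hP
  obtain ⟨w, hPw⟩ := hrep P' hP'
  by_cases hfin : ((conjSub g P ⊓ P' : Subgroup G) : Set G).Finite
  · exact Or.inl hfin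
  · right
    have hconjP : conjSub g P = MulAction.stabilizer G (g • v) := by
      rw [hPv, conjSub_stabilizer]
    have hsub : ((conjSub g P ⊓ P' : Subgroup G) : Set G) ⊆
        {x : G | x • (g • v) = g • v ∧ x • w = w} := by
      intro x hx
      rw [SetLike.mem_coe, Subgroup.mem_inf] at hx
      obtain ⟨h1, h2⟩ := hx
      rw [hconjP, MulAction.mem_stabilizer_iff] at h1
      rw [hPw, MulAction.mem_stabilizer_iff] at h2
      exact ⟨h1, h2⟩
    have hgvw : g • v = w := by
      by_contra hne
      exact hfin ((stab_pair_finite hconn hfine hadj hstab hne).subset hsub)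
    have hPP' : conjSub g P = P' := by rw [hconjP, hgvw, hPw]
    have hPeq : P = P' := huniq P hP P' hP' ⟨g, hPP'⟩
    refine ⟨hPeq, ?_⟩
    have hgv : g • v = v := by
      by_contra hne
      have hvw : v ≠ w := by
        intro h
        rw [← h] at hgvw
        exact hne hgvw
      have hsub2 : ((P' : Subgroup G) : Set G) ⊆ {x : G | x • v = v ∧ x • w = w} := by
        intro x hx
        rw [SetLike.mem_coe] at hx
        constructor
        · have hx2 : x ∈ P := hPeq ▸ hx
          rw [hPv, MulAction.mem_stabilizer_iff] at hx2
          exact hx2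
        · rw [hPw, MulAction.mem_stabilizer_iff] at hx
          exact hx
      have hfinP' : ((P' : Subgroup G) : Set G).Finite :=
        (stab_pair_finite hconn hfine hadj hstab hvw).subset hsub2
      apply hfin
      refine hfinP'.subset ?_
      intro x hx
      rw [SetLike.mem_coe, Subgroup.mem_inf] at hx
      exact hx.2
    rw [hPv, MulAction.mem_stabilizer_iff]
    exact hgv
end
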